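/- Let R > 0, L, Q ∈ ℝ and let a, b, c, d ∈ ℝ with ad − bc ≠ 0. Define R̃ := |ad − bc|·R, e^{L̃} := ((a + cQ)² e^L + c² e^{−L}) / |ad − bc| (a strictly positive quantity), and Q̃ := ((a + cQ)(b + dQ) e^L + c d e^{−L}) / ((a + cQ)² e^L + c² e^{−L}). Then for all X₁, X₂ ∈ ℝ the quadratic-form identity holds: R·[ e^L·((a X₁ + b X₂) + Q·(c X₁ + d X₂))² + e^{−L}·(c X₁ + d X₂)² ] = R̃·[ e^{L̃}·(X₁ + Q̃ X₂)² + e^{−L̃}·X₂² ]. -/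

import Mathlib

noncomputable section

open Real

/-- Transformation of the Gowdy orbit metric under a linear reparametrization of the
Killing orbits: the quadratic form identity. -/
theorem gowdy_orbit_reparametrization
    (R L Q a b c d : ℝ) (hR : 0 < R) (h : a * d - b * c ≠ 0) :
    0 < ((a + c * Q) ^ 2 * Real.exp L + c ^ 2 * Real.exp (-L)) / |a * d - b * c| ∧
    ∀ X₁ X₂ : ℝ,
      R * (Real.exp L * ((a * X₁ + b * X₂) + Q * (c * X₁ + d * X₂)) ^ 2
          + Real.exp (-L) * (c * X₁ + d * X₂) ^ 2)
        = (|a * d - b * c| * R) *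
          ((((a + c * Q) ^ 2 * Real.exp L + c ^ 2 * Real.exp (-L)) / |a * d - b * c|)
              * (X₁ + (((a + c * Q) * (b + d * Q) * Real.exp L + c * d * Real.exp (-L))
                  / ((a + c * Q) ^ 2 * Real.exp L + c ^ 2 * Real.exp (-L))) * X₂) ^ 2
            + (((a + c * Q) ^ 2 * Real.exp L + c ^ 2 * Real.exp (-L))
                  / |a * d - b * c|)⁻¹ * X₂ ^ 2) := by
  have hEL := Real.exp_pos L
  have hELn := Real.exp_pos (-L)
  have hE : 0 < (a + c * Q) ^ 2 * Real.exp L + c ^ 2 * Real.exp (-L) := by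
    rcases eq_or_ne c 0 with hc | hc
    · have ha : a ≠ 0 := by
        intro h0; apply h; rw [h0, hc]; ring
      have : a + c * Q ≠ 0 := by rw [hc]; simpa using ha
      positivity
    · positivity
  have habs : 0 < |a * d - b * c| := abs_pos.mpr h
  refine ⟨by positivity, fun X₁ X₂ => ?_⟩
  have hmul : Real.exp L * Real.exp (-L) = 1 := by
    rw [← Real.exp_add]; simp
  have hsq : |a * d - b * c| ^ 2 = (a * d - b * c) ^ 2 := sq_abs _
  have hE2 : rexp L * (a + Q * c) ^ 2 + c ^ 2 * rexp (-L) ≠ 0 := by nlinarith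
  field_simp
  linear_combination
    (X₂ ^ 2 * (a * d - b * c) ^ 2) * hmul
    - (X₂ ^ 2) * hsq
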